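/- Let q = p^n with p prime, let A, B ∈ F_q[x] be additive polynomials (F_p-linear maps on F_q), and let g ∈ F_q[x] be arbitrary. Then f(x) = A(x) + g(B(x)) permutes F_q if and only if A(ker B) + f̂(im B) = F_q, where f̂(x) = g(x) + A(B̂(x)) and B̂ is any polynomial such that B(B̂(γ)) = γ for all γ ∈ im B. -/

import Mathlib

open Pointwise

/-- Proposition (additive cyclotomy): `f(x) = A(x) + g(B(x))` permutes `F_q`
iff `A(ker B) + f̂(im B) = F_q`. -/
theorem stmt_3 (p n : ℕ) (hp : p.Prime) (hn : 0 < n)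
    (F : Type*) [Field F] [Fintype F] (hq : Fintype.card F = p ^ n) (hchar : CharP F p)
    (A B : Polynomial F)
    (hA : ∃ (m : ℕ) (a : ℕ → F),
      A = ∑ i ∈ Finset.range m, Polynomial.C (a i) * Polynomial.X ^ (p ^ i))
    (hB : ∃ (m : ℕ) (a : ℕ → F),
      B = ∑ i ∈ Finset.range m, Polynomial.C (a i) * Polynomial.X ^ (p ^ i))
    (g : Polynomial F)
    (Bhat : Polynomial F)
    (hBhat : ∀ γ ∈ Set.range (fun x : F => B.eval x), B.eval (Bhat.eval γ) = γ) :
    Function.Bijective (fun x : F => A.eval x + g.eval (B.eval x)) ↔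
      ((fun x : F => A.eval x) '' {x : F | B.eval x = 0} +
        (fun x : F => g.eval x + A.eval (Bhat.eval x)) ''
          Set.range (fun x : F => B.eval x)) = Set.univ := by
  haveI := Fact.mk hp
  have key : ∀ (P : Polynomial F), (∃ (m : ℕ) (a : ℕ → F),
      P = ∑ i ∈ Finset.range m, Polynomial.C (a i) * Polynomial.X ^ (p ^ i)) →
      ∀ x y : F, P.eval (x + y) = P.eval x + P.eval y := by
    rintro P ⟨m, a, rfl⟩ x y
    simp only [Polynomial.eval_finset_sum, Polynomial.eval_mul, Polynomial.eval_C,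
      Polynomial.eval_pow, Polynomial.eval_X]
    rw [← Finset.sum_add_distrib]
    refine Finset.sum_congr rfl fun i _ => ?_
    rw [add_pow_char_pow, mul_add]
  have hAadd := key A hA
  have hBadd := key B hB
  have hrange : Set.range (fun x : F => A.eval x + g.eval (B.eval x)) =
      ((fun x : F => A.eval x) '' {x : F | B.eval x = 0} +
        (fun x : F => g.eval x + A.eval (Bhat.eval x)) ''
          Set.range (fun x : F => B.eval x)) := by
    ext z
    simp only [Set.mem_range, Set.mem_add, Set.mem_image, Set.mem_setOf_eq]
    constructor
    · rintro ⟨x, rfl⟩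
      refine ⟨A.eval (x - Bhat.eval (B.eval x)), ⟨x - Bhat.eval (B.eval x), ?_, rfl⟩,
        g.eval (B.eval x) + A.eval (Bhat.eval (B.eval x)), ⟨B.eval x, ⟨x, rfl⟩, rfl⟩, ?_⟩
      · have h1 := hBadd (x - Bhat.eval (B.eval x)) (Bhat.eval (B.eval x))
        rw [sub_add_cancel, hBhat (B.eval x) ⟨x, rfl⟩] at h1
        exact (right_eq_add.mp h1)
      · have h1 := hAadd (x - Bhat.eval (B.eval x)) (Bhat.eval (B.eval x))
        rw [sub_add_cancel] at h1
        rw [h1]; ring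
    · rintro ⟨u, ⟨k, hk, rfl⟩, v, ⟨γ, ⟨x₀, rfl⟩, rfl⟩, rfl⟩
      refine ⟨k + Bhat.eval (B.eval x₀), ?_⟩
      have hbk : B.eval (k + Bhat.eval (B.eval x₀)) = B.eval x₀ := by
        rw [hBadd, hk, zero_add, hBhat _ ⟨x₀, rfl⟩]
      rw [hAadd, hbk]; ring
  rw [← hrange]
  constructor
  · intro h
    exact Set.range_eq_univ.mpr h.surjective
  · intro h
    exact Finite.surjective_iff_bijective.mp (Set.range_eq_univ.mp h)
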